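/- Let G be a finite Abelian group, X a nonempty subset, and k ≥ 1 a natural number. Then Σ_{γ∈Ĝ} |1̂_X(γ)|^{2k} ≥ |G| · |X|^{2k} / |kX|, where 1̂_X(γ) = Σ_{x∈G} 1_X(x) conj(γ(x)) and kX is the k-fold sumset. -/

import Mathlib

open Pointwise

private lemma sum_mem_nsmul_aux {G : Type*} [AddCommGroup G] [DecidableEq G]
    (X : Finset G) (k : ℕ) (f : Fin k → G) (hf : ∀ i, f i ∈ X) : ∑ i, f i ∈ k • X := by
  induction k with
  | zero => simp
  | succ n ih =>
      rw [succ_nsmul, Fin.sum_univ_castSucc]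
      exact Finset.add_mem_add (ih _ fun i => hf i.castSucc) (hf (Fin.last n))

private lemma addChar_map_sum {G ι : Type*} [AddCommGroup G] (γ : AddChar G ℂ)
    (s : Finset ι) (f : ι → G) : γ (∑ i ∈ s, f i) = ∏ i ∈ s, γ (f i) := by
  classical
  induction s using Finset.induction with
  | empty => simp
  | insert _ _ h ih => simp [Finset.sum_insert h, Finset.prod_insert h, AddChar.map_add_eq_mul, ih]

/-- Moment lower bound for the Fourier transform of an indicator:
`∑_γ |1̂_X(γ)|^{2k} ≥ |G| |X|^{2k} / |kX|`. -/
theorem fourier_moment_lower_bound {G : Type*} [AddCommGroup G] [Fintype G]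
    [DecidableEq G] [Fintype (AddChar G ℂ)]
    (X : Finset G) (hX : X.Nonempty) (k : ℕ) (hk : 1 ≤ k) :
    (Fintype.card G : ℝ) * (X.card : ℝ) ^ (2 * k) / ((k • X).card : ℝ) ≤
      ∑ γ : AddChar G ℂ, ‖∑ x ∈ X, (starRingEnd ℂ) (γ x)‖ ^ (2 * k) := by
  classical
  set F : Finset (Fin k → G) := Fintype.piFinset (fun _ : Fin k => X) with hF
  set r : G → ℕ := fun s => (F.filter (fun f => ∑ i, f i = s)).card with hr
  have horth : ∀ a : G, ∑ γ : AddChar G ℂ, γ a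
      = if a = 0 then (Fintype.card G : ℂ) else 0 := fun a => by
    have h := AddChar.sum_apply_eq_ite (α := G) a
    convert h using 2
    congr!
  -- Step A : rewrite each term as ‖∑ s, r s * γ s‖^2
  have stepA : ∀ γ : AddChar G ℂ,
      ‖∑ x ∈ X, (starRingEnd ℂ) (γ x)‖ ^ (2 * k) = ‖∑ s : G, (r s : ℂ) * γ s‖ ^ 2 := by
    intro γ
    have h1 : ‖∑ x ∈ X, (starRingEnd ℂ) (γ x)‖ = ‖∑ x ∈ X, γ x‖ := by
      rw [← map_sum]
      exact RCLike.norm_conj _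
    have h2 : (∑ x ∈ X, γ x) ^ k = ∑ s : G, (r s : ℂ) * γ s := by
      have hpow : (∑ x ∈ X, γ x) ^ k = ∑ f ∈ F, γ (∑ i, f i) := by
        rw [← Fin.prod_const k (∑ x ∈ X, γ x), Finset.prod_univ_sum]
        exact Finset.sum_congr rfl fun f _ => (addChar_map_sum γ _ _).symm
      rw [hpow, ← Finset.sum_fiberwise F (fun f => ∑ i, f i) (fun f => γ (∑ i, f i))]
      refine Finset.sum_congr rfl fun s _ => ?_
      have : ∑ f ∈ F.filter (fun f => ∑ i, f i = s), γ (∑ i, f i)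
          = ∑ _f ∈ F.filter (fun f => ∑ i, f i = s), γ s :=
        Finset.sum_congr rfl fun f hf => by rw [(Finset.mem_filter.1 hf).2]
      rw [this, Finset.sum_const, nsmul_eq_mul]
    calc ‖∑ x ∈ X, (starRingEnd ℂ) (γ x)‖ ^ (2 * k)
        = (‖∑ x ∈ X, γ x‖ ^ k) ^ 2 := by rw [h1, ← pow_mul, mul_comm k 2]
      _ = ‖(∑ x ∈ X, γ x) ^ k‖ ^ 2 := by rw [norm_pow]
      _ = ‖∑ s : G, (r s : ℂ) * γ s‖ ^ 2 := by rw [h2]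
  -- Step B : Parseval
  have stepB : ∑ γ : AddChar G ℂ, ‖∑ s : G, (r s : ℂ) * γ s‖ ^ 2
      = (Fintype.card G : ℝ) * ∑ s : G, (r s : ℝ) ^ 2 := by
    have hz : ∀ γ : AddChar G ℂ,
        (∑ s : G, (r s : ℂ) * γ s) * (starRingEnd ℂ) (∑ t : G, (r t : ℂ) * γ t)
          = ∑ s : G, ∑ t : G, (r s : ℂ) * (r t : ℂ) * γ (s - t) := by
      intro γ
      rw [map_sum, Finset.sum_mul_sum]
      refine Finset.sum_congr rfl fun s _ => Finset.sum_congr rfl fun t _ => ?_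
      rw [map_mul, map_natCast, ← AddChar.map_neg_eq_conj, sub_eq_add_neg,
        AddChar.map_add_eq_mul]
      ring
    have hbig : ∑ γ : AddChar G ℂ,
        (∑ s : G, (r s : ℂ) * γ s) * (starRingEnd ℂ) (∑ t : G, (r t : ℂ) * γ t)
        = (Fintype.card G : ℂ) * ∑ s : G, (r s : ℂ) ^ 2 := by
      simp_rw [hz]
      rw [Finset.sum_comm, Finset.mul_sum]
      refine Finset.sum_congr rfl fun s _ => ?_
      rw [Finset.sum_comm]
      have hinner : ∀ t : G, ∑ γ : AddChar G ℂ, (r s : ℂ) * (r t : ℂ) * γ (s - t)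
          = if s = t then (r s : ℂ) * (r t : ℂ) * (Fintype.card G : ℂ) else 0 := by
        intro t
        rw [← Finset.mul_sum, horth (s - t)]
        by_cases h : s = t <;> simp [h, sub_eq_zero]
      rw [Finset.sum_congr rfl fun t _ => hinner t, Finset.sum_ite_eq Finset.univ s
        (fun t => (r s : ℂ) * (r t : ℂ) * (Fintype.card G : ℂ))]
      simp only [Finset.mem_univ, if_true]
      ring
    have hre : ∀ γ : AddChar G ℂ, ‖∑ s : G, (r s : ℂ) * γ s‖ ^ 2
        = ((∑ s : G, (r s : ℂ) * γ s) * (starRingEnd ℂ) (∑ t : G, (r t : ℂ) * γ t)).re := by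
      intro γ
      rw [Complex.mul_conj, Complex.ofReal_re, Complex.normSq_eq_norm_sq]
    calc ∑ γ : AddChar G ℂ, ‖∑ s : G, (r s : ℂ) * γ s‖ ^ 2
        = (∑ γ : AddChar G ℂ,
            (∑ s : G, (r s : ℂ) * γ s) * (starRingEnd ℂ) (∑ t : G, (r t : ℂ) * γ t)).re := by
          rw [Complex.re_sum]; exact Finset.sum_congr rfl fun γ _ => hre γ
      _ = ((Fintype.card G : ℂ) * ∑ s : G, (r s : ℂ) ^ 2).re := by rw [hbig]
      _ = (Fintype.card G : ℝ) * ∑ s : G, (r s : ℝ) ^ 2 := by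
          rw [show ((Fintype.card G : ℂ) * ∑ s : G, (r s : ℂ) ^ 2)
            = (((Fintype.card G : ℝ) * ∑ s : G, (r s : ℝ) ^ 2 : ℝ) : ℂ) by push_cast; ring,
            Complex.ofReal_re]
  -- facts about r
  have hsupp : ∀ s : G, s ∉ k • X → r s = 0 := by
    intro s hs
    rw [hr]
    rw [Finset.card_eq_zero, Finset.filter_eq_empty_iff]
    intro f hf hsum
    exact hs (hsum ▸ sum_mem_nsmul_aux X k f (fun i => Fintype.mem_piFinset.1 hf i))
  have h1 : ∑ s : G, r s = F.card := by
    calc ∑ s : G, r s = ∑ s : G, ∑ _f ∈ F.filter (fun f => ∑ i, f i = s), 1 := by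
          simp [hr]
      _ = ∑ _f ∈ F, 1 := Finset.sum_fiberwise F _ _
      _ = F.card := by simp
  have h2 : ∑ s : G, r s = ∑ s ∈ k • X, r s :=
    (Finset.sum_subset (Finset.subset_univ _) (fun s _ hs => hsupp s hs)).symm
  have h3 : F.card = X.card ^ k := by simp [hF]
  have hsum_r : ∑ s ∈ k • X, (r s : ℝ) = (X.card : ℝ) ^ k := by
    rw [← Nat.cast_sum, ← h2, h1, h3]
    push_cast
    ring
  -- Cauchy-Schwarz
  have hCS : ((X.card : ℝ) ^ k) ^ 2 ≤ ((k • X).card : ℝ) * ∑ s ∈ k • X, (r s : ℝ) ^ 2 := by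
    rw [← hsum_r]
    exact_mod_cast sq_sum_le_card_mul_sum_sq (s := k • X) (f := fun s => (r s : ℝ))
  have hsq_le : ∑ s ∈ k • X, (r s : ℝ) ^ 2 ≤ ∑ s : G, (r s : ℝ) ^ 2 :=
    Finset.sum_le_sum_of_subset_of_nonneg (Finset.subset_univ _)
      (fun s _ _ => by positivity)
  have hkX : (0 : ℝ) < ((k • X).card : ℝ) := by
    have : (k • X).Nonempty := by
      obtain ⟨x, hx⟩ := hX
      exact ⟨∑ _i : Fin k, x, sum_mem_nsmul_aux X k (fun _ => x) (fun _ => hx)⟩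
    exact_mod_cast Finset.card_pos.2 this
  -- conclude
  rw [div_le_iff₀ hkX]
  calc (Fintype.card G : ℝ) * (X.card : ℝ) ^ (2 * k)
      = (Fintype.card G : ℝ) * ((X.card : ℝ) ^ k) ^ 2 := by rw [← pow_mul, mul_comm k 2]
    _ ≤ (Fintype.card G : ℝ) * (((k • X).card : ℝ) * ∑ s ∈ k • X, (r s : ℝ) ^ 2) := by
        have hG : (0 : ℝ) ≤ (Fintype.card G : ℝ) := by positivity
        exact mul_le_mul_of_nonneg_left hCS hG
    _ ≤ (Fintype.card G : ℝ) * (((k • X).card : ℝ) * ∑ s : G, (r s : ℝ) ^ 2) := by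
        have hG : (0 : ℝ) ≤ (Fintype.card G : ℝ) := by positivity
        exact mul_le_mul_of_nonneg_left (mul_le_mul_of_nonneg_left hsq_le hkX.le) hG
    _ = ((Fintype.card G : ℝ) * ∑ s : G, (r s : ℝ) ^ 2) * ((k • X).card : ℝ) := by ring
    _ = (∑ γ : AddChar G ℂ, ‖∑ x ∈ X, (starRingEnd ℂ) (γ x)‖ ^ (2 * k)) * ((k • X).card : ℝ) := by
        rw [Finset.sum_congr rfl fun γ _ => stepA γ, stepB]
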